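/- Let ε > 0, α ∈ (0,1), 0 < θ₀ < θ₁ < 1, n ≥ 1, and X ~ Binom(n, θ). Let N₀ ~ Tulap(0, e^{−ε}, 0) and define φ*_x = F_{N₀}(x − m), where m is chosen so that E_{θ₀} φ*_X = α. Then φ* is the uniformly most powerful level-α test of H₀: θ = θ₀ versus H₁: θ = θ₁ among all tests φ : {0,...,n} → [0,1] satisfying the (ε,0)-DP constraints: for all x, φ_x ≤ e^ε φ_{x+1}, φ_{x+1} ≤ e^ε φ_x, 1 − φ_x ≤ e^ε(1 − φ_{x+1}), and 1 − φ_{x+1} ≤ e^ε(1 − φ_x). That is, any DP test φ with E_{θ₀} φ_X ≤ α has E_{θ₁} φ_X ≤ E_{θ₁} φ*_X. -/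

import Mathlib

open Real Finset

/-- cdf of `Tulap(0,b,0)`, the distribution of `DLap(b) + Unif(-1/2,1/2)`. -/
noncomputable def tulapCdf0 (b : ℝ) (x : ℝ) : ℝ :=
  if x ≤ 0 then b ^ (-(round x)) / (1 + b) * (b + (x - round x + 1/2) * (1 - b))
  else 1 - b ^ (round x) / (1 + b) * (b + ((round x : ℝ) - x + 1/2) * (1 - b))

/-- Binomial(n,θ) pmf. -/
noncomputable def binomPmf (n : ℕ) (θ : ℝ) (x : ℕ) : ℝ :=
  (n.choose x : ℝ) * θ ^ x * (1 - θ) ^ (n - x)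

/-- Power of a randomized test `φ` on binomial data: `E_θ φ_X`. -/
noncomputable def binomPower (n : ℕ) (φ : ℕ → ℝ) (θ : ℝ) : ℝ :=
  ∑ x ∈ Finset.range (n + 1), φ x * binomPmf n θ x

/-- The (ε,0)-DP constraints (DP1)-(DP4) on a test for binomial data. -/
def IsDPTest (ε : ℝ) (n : ℕ) (φ : ℕ → ℝ) : Prop :=
  ∀ x < n, φ x ≤ Real.exp ε * φ (x+1) ∧ φ (x+1) ≤ Real.exp ε * φ x ∧
    (1 - φ x) ≤ Real.exp ε * (1 - φ (x+1)) ∧ (1 - φ (x+1)) ≤ Real.exp ε * (1 - φ x)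

lemma round_lb (x : ℝ) : (round x : ℝ) - 1/2 ≤ x := by
  rw [round_eq]; have := Int.floor_le (x + 1/2); push_cast at this ⊢; linarith

lemma round_ub (x : ℝ) : x < (round x : ℝ) + 1/2 := by
  rw [round_eq]; have := Int.lt_floor_add_one (x + 1/2); push_cast at this ⊢; linarith

lemma round_nonpos_of {t : ℝ} (ht : t ≤ 0) : round t ≤ 0 := by
  by_contra h
  push_neg at h
  have : (1:ℝ) ≤ (round t : ℝ) := by exact_mod_cast h
  have := round_lb t; linarith

lemma round_nonneg_of {t : ℝ} (ht : 0 < t) : 0 ≤ round t := by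
  by_contra h
  push_neg at h
  have h1 : round t ≤ -1 := by omega
  have : (round t : ℝ) ≤ -1 := by exact_mod_cast h1
  have := round_ub t; linarith

lemma tulap_mem_Icc {b : ℝ} (hb : 0 < b) (hb1 : b < 1) (t : ℝ) :
    tulapCdf0 b t ∈ Set.Icc (0:ℝ) 1 := by
  have h1b : (0:ℝ) < 1 + b := by linarith
  have anti := (zpow_right_strictAnti₀ hb hb1).antitone
  unfold tulapCdf0
  split_ifs with ht
  · have hk : round t ≤ 0 := round_nonpos_of ht
    have hzle : b ^ (-round t) ≤ 1 := by
      calc b ^ (-round t) ≤ b ^ (0:ℤ) := anti (by omega)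
        _ = 1 := zpow_zero b
    have hzpos : 0 < b ^ (-round t) := zpow_pos hb _
    have hs1 : 0 ≤ t - round t + 1/2 := by have := round_lb t; linarith
    have hs2 : t - round t + 1/2 ≤ 1 := by have := round_ub t; linarith
    have hu0 : 0 ≤ b + (t - round t + 1/2) * (1 - b) := by nlinarith
    have hu1 : b + (t - round t + 1/2) * (1 - b) ≤ 1 := by nlinarith
    constructor
    · positivity
    · rw [div_mul_eq_mul_div, div_le_one h1b]; nlinarith
  · push_neg at ht
    have hk : 0 ≤ round t := round_nonneg_of ht
    have hzle : b ^ (round t) ≤ 1 := by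
      calc b ^ (round t) ≤ b ^ (0:ℤ) := anti (by omega)
        _ = 1 := zpow_zero b
    have hzpos : 0 < b ^ (round t) := zpow_pos hb _
    have hs1 : 0 ≤ (round t : ℝ) - t + 1/2 := by have := round_ub t; linarith
    have hs2 : (round t : ℝ) - t + 1/2 ≤ 1 := by have := round_lb t; linarith
    have hu0 : 0 ≤ b + ((round t : ℝ) - t + 1/2) * (1 - b) := by nlinarith
    have hu1 : b + ((round t : ℝ) - t + 1/2) * (1 - b) ≤ 1 := by nlinarith
    constructor
    · have : b ^ (round t) / (1 + b) * (b + ((round t : ℝ) - t + 1/2) * (1 - b)) ≤ 1 := by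
        rw [div_mul_eq_mul_div, div_le_one h1b]; nlinarith
      linarith
    · have : 0 ≤ b ^ (round t) / (1 + b) * (b + ((round t : ℝ) - t + 1/2) * (1 - b)) := by positivity
      linarith

set_option maxHeartbeats 1000000 in
lemma tulap_step {b : ℝ} (hb : 0 < b) (hb1 : b < 1) (t : ℝ) :
    tulapCdf0 b (t + 1) =
      min (tulapCdf0 b t / b) (1 - b * (1 - tulapCdf0 b t)) := by
  have h1b : (0:ℝ) < 1 + b := by linarith
  have hr1 : round (t + 1) = round t + 1 := by exact_mod_cast round_add_intCast t 1
  have anti := (zpow_right_strictAnti₀ hb hb1).antitone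
  rcases le_or_gt (t + 1) 0 with hA | hA'
  · -- Case A : t + 1 ≤ 0
    have ht : t ≤ 0 := by linarith
    have hk1 : round t + 1 ≤ 0 := hr1 ▸ round_nonpos_of hA
    have hlb := round_lb t
    have hub := round_ub t
    obtain ⟨k, hkr⟩ : ∃ k, round t = k := ⟨_, rfl⟩
    rw [hkr] at hr1 hk1 hlb hub
    have hk : k ≤ -1 := by omega
    have hFt : tulapCdf0 b t = b ^ (-k) / (1 + b) * (b + (t - k + 1/2) * (1 - b)) := by
      unfold tulapCdf0; rw [if_pos ht, hkr]
    have hFt1 : tulapCdf0 b (t+1)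
        = b ^ (-(k+1)) / (1 + b) * (b + (t - k + 1/2) * (1 - b)) := by
      unfold tulapCdf0
      rw [if_pos hA, hr1]
      have e : (t+1) - ((k+1:ℤ):ℝ) + 1/2 = t - (k:ℝ) + 1/2 := by push_cast; ring
      rw [e]
    have hzeq : b ^ (-(k+1)) = b ^ (-k) / b := by
      rw [neg_add, zpow_add₀ hb.ne', zpow_neg_one]
      field_simp
    have heq : tulapCdf0 b (t+1) = tulapCdf0 b t / b := by
      rw [hFt1, hFt, hzeq]; ring
    -- F t ≤ b/(1+b)
    have hBle : b ^ (-k) ≤ b := by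
      calc b ^ (-k) ≤ b ^ (1:ℤ) := anti (by omega)
        _ = b := zpow_one b
    have hBpos : 0 < b ^ (-k) := zpow_pos hb _
    have hs1 : 0 ≤ t - k + 1/2 := by linarith
    have hs2 : t - k + 1/2 ≤ 1 := by linarith
    have hu1 : b + (t - k + 1/2) * (1 - b) ≤ 1 := by nlinarith
    have hu0 : 0 ≤ b + (t - k + 1/2) * (1 - b) := by nlinarith
    have hF : tulapCdf0 b t * (1 + b) ≤ b := by
      rw [hFt]; rw [div_mul_eq_mul_div]
      rw [div_mul_eq_mul_div, div_le_iff₀ h1b]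
      nlinarith [mul_le_mul hBle hu1 hu0 hb.le]
    rw [heq, min_eq_left]
    rw [div_le_iff₀ hb]
    nlinarith [tulap_mem_Icc hb hb1 t]
  · rcases le_or_gt t 0 with ht | ht
    · -- Case B : -1 < t ≤ 0
      have hklb : (-1 : ℤ) ≤ round t := by
        by_contra h
        push_neg at h
        have h2 : round t ≤ -2 := by omega
        have : (round t : ℝ) ≤ -2 := by exact_mod_cast h2
        have := round_ub t; linarith
      have hkub : round t ≤ 0 := round_nonpos_of ht
      rcases (by omega : round t = -1 ∨ round t = 0) with h | h
      · -- round t = -1, t ∈ (-1, -1/2)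
        have htub : t < -1/2 := by
          have := round_ub t; rw [h] at this; push_cast at this; linarith
        have htlb : -1 < t := by linarith
        have hFt : tulapCdf0 b t = b / (1 + b) * (b + (t + 3/2) * (1 - b)) := by
          unfold tulapCdf0; rw [if_pos ht, h]
          have h0 : -(-1:ℤ) = 1 := rfl
          rw [h0, zpow_one]
          push_cast
          ring_nf
        have hFt1 : tulapCdf0 b (t+1) = 1 - 1 / (1 + b) * (b + (- t - 1/2) * (1 - b)) := by
          unfold tulapCdf0
          rw [if_neg (by linarith), hr1, h]
          have h0 : (-1:ℤ) + 1 = 0 := rfl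
          rw [h0, zpow_zero]
          push_cast
          ring_nf
        have heq : tulapCdf0 b (t+1) = tulapCdf0 b t / b := by
          rw [hFt1, hFt]; field_simp; ring
        rw [heq, min_eq_left]
        rw [div_le_iff₀ hb]
        have hu1 : b + (t + 3/2) * (1 - b) ≤ 1 := by nlinarith
        have hF : tulapCdf0 b t * (1 + b) ≤ b := by
          rw [hFt, div_mul_eq_mul_div, div_mul_eq_mul_div, div_le_iff₀ h1b]
          nlinarith [mul_le_mul_of_nonneg_left hu1 hb.le]
        nlinarith [tulap_mem_Icc hb hb1 t]
      · -- round t = 0, t ∈ [-1/2, 0]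
        have htlb : -1/2 ≤ t := by
          have := round_lb t; rw [h] at this; push_cast at this; linarith
        have hFt : tulapCdf0 b t = 1 / (1 + b) * (b + (t + 1/2) * (1 - b)) := by
          unfold tulapCdf0; rw [if_pos ht, h]
          have h0 : -(0:ℤ) = 0 := rfl
          rw [h0, zpow_zero]
          push_cast
          ring_nf
        have hFt1 : tulapCdf0 b (t+1) = 1 - b / (1 + b) * (b + (1/2 - t) * (1 - b)) := by
          unfold tulapCdf0
          rw [if_neg (by linarith), hr1, h]
          have h0 : (0:ℤ) + 1 = 1 := rfl
          rw [h0, zpow_one]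
          push_cast
          ring_nf
        have heq : tulapCdf0 b (t+1) = 1 - b * (1 - tulapCdf0 b t) := by
          rw [hFt1, hFt]
          field_simp
          ring_nf
        rw [heq, min_eq_right]
        rw [le_div_iff₀ hb]
        have hu0 : b ≤ b + (t + 1/2) * (1 - b) := by nlinarith
        have hF : b ≤ tulapCdf0 b t * (1 + b) := by
          rw [hFt, div_mul_eq_mul_div, div_mul_eq_mul_div, le_div_iff₀ h1b]
          nlinarith
        nlinarith [tulap_mem_Icc hb hb1 t]
    · -- Case C : t > 0
      have hk0 : 0 ≤ round t := round_nonneg_of ht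
      have hlb := round_lb t
      have hub := round_ub t
      obtain ⟨k, hkr⟩ : ∃ k, round t = k := ⟨_, rfl⟩
      rw [hkr] at hr1 hk0 hlb hub
      have hFt : tulapCdf0 b t = 1 - b ^ k / (1 + b) * (b + ((k:ℝ) - t + 1/2) * (1 - b)) := by
        unfold tulapCdf0; rw [if_neg (by linarith), hkr]
      have hFt1 : tulapCdf0 b (t+1)
          = 1 - b ^ (k+1) / (1 + b) * (b + ((k:ℝ) - t + 1/2) * (1 - b)) := by
        unfold tulapCdf0
        rw [if_neg (by linarith), hr1]
        have e : ((k+1:ℤ):ℝ) - (t+1) + 1/2 = (k:ℝ) - t + 1/2 := by push_cast; ring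
        rw [e]
      have hzeq : b ^ (k+1) = b ^ k * b := by
        rw [zpow_add₀ hb.ne', zpow_one]
      have heq : tulapCdf0 b (t+1) = 1 - b * (1 - tulapCdf0 b t) := by
        rw [hFt1, hFt, hzeq]; ring
      have hBle : b ^ k ≤ 1 := by
        calc b ^ k ≤ b ^ (0:ℤ) := anti (by omega)
          _ = 1 := zpow_zero b
      have hBpos : 0 < b ^ k := zpow_pos hb _
      have hs1 : 0 ≤ (k:ℝ) - t + 1/2 := by linarith
      have hs2 : (k:ℝ) - t + 1/2 ≤ 1 := by linarith
      have hu1 : b + ((k:ℝ) - t + 1/2) * (1 - b) ≤ 1 := by nlinarith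
      have hu0 : 0 ≤ b + ((k:ℝ) - t + 1/2) * (1 - b) := by nlinarith
      have key : b ^ k * (b + ((k:ℝ) - t + 1/2) * (1 - b)) ≤ 1 := by
        nlinarith [mul_le_mul hBle hu1 hu0 zero_le_one]
      have hF : b ≤ tulapCdf0 b t * (1 + b) := by
        rw [hFt]
        have h3 : (1 - b ^ k / (1 + b) * (b + ((k:ℝ) - t + 1/2) * (1 - b))) * (1 + b)
            = (1 + b) - b ^ k * (b + ((k:ℝ) - t + 1/2) * (1 - b)) := by field_simp
        rw [h3]; linarith
      rw [heq, min_eq_right]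
      rw [le_div_iff₀ hb]
      nlinarith [tulap_mem_Icc hb hb1 t]

lemma binom_mlr {θ₀ θ₁ : ℝ} (hθ₀ : 0 < θ₀) (hθ : θ₀ < θ₁) (hθ₁ : θ₁ < 1)
    {n x y : ℕ} (hxy : x ≤ y) (hy : y ≤ n) :
    binomPmf n θ₁ x * binomPmf n θ₀ y ≤ binomPmf n θ₁ y * binomPmf n θ₀ x := by
  obtain ⟨d, rfl⟩ : ∃ d, y = x + d := ⟨y - x, by omega⟩
  have hnx : n - x = (n - (x + d)) + d := by omega
  have h1θ₁ : 0 < 1 - θ₁ := by linarith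
  have h1θ₀ : 0 < 1 - θ₀ := by linarith
  have hθ₁0 : 0 < θ₁ := by linarith
  have key : (θ₀ * (1 - θ₁)) ^ d ≤ (θ₁ * (1 - θ₀)) ^ d := by
    apply pow_le_pow_left₀ (by positivity) (by nlinarith)
  have hA : 0 ≤ (n.choose x : ℝ) * (n.choose (x + d) : ℝ) * θ₁ ^ x * θ₀ ^ x
      * (1 - θ₁) ^ (n - (x + d)) * (1 - θ₀) ^ (n - (x + d)) := by positivity
  unfold binomPmf
  rw [hnx]
  calc (n.choose x : ℝ) * θ₁ ^ x * (1 - θ₁) ^ (n - (x + d) + d)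
        * ((n.choose (x + d) : ℝ) * θ₀ ^ (x + d) * (1 - θ₀) ^ (n - (x + d)))
      = ((n.choose x : ℝ) * (n.choose (x + d) : ℝ) * θ₁ ^ x * θ₀ ^ x
          * (1 - θ₁) ^ (n - (x + d)) * (1 - θ₀) ^ (n - (x + d))) * (θ₀ * (1 - θ₁)) ^ d := by
        rw [mul_pow, pow_add, pow_add]; ring
    _ ≤ ((n.choose x : ℝ) * (n.choose (x + d) : ℝ) * θ₁ ^ x * θ₀ ^ x
          * (1 - θ₁) ^ (n - (x + d)) * (1 - θ₀) ^ (n - (x + d))) * (θ₁ * (1 - θ₀)) ^ d :=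
        mul_le_mul_of_nonneg_left key hA
    _ = (n.choose (x + d) : ℝ) * θ₁ ^ (x + d) * (1 - θ₁) ^ (n - (x + d))
        * ((n.choose x : ℝ) * θ₀ ^ x * (1 - θ₀) ^ (n - (x + d) + d)) := by
        rw [mul_pow, pow_add, pow_add]; ring

lemma binomPmf_pos {θ : ℝ} (hθ0 : 0 < θ) (hθ1 : θ < 1) {n x : ℕ} (hx : x ≤ n) :
    0 < binomPmf n θ x := by
  unfold binomPmf
  have hc : (0:ℝ) < (n.choose x : ℝ) := by exact_mod_cast Nat.choose_pos hx
  have h1 : (0:ℝ) < 1 - θ := by linarith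
  positivity

lemma binomPmf_nonneg {θ : ℝ} (hθ0 : 0 ≤ θ) (hθ1 : θ ≤ 1) (n x : ℕ) :
    0 ≤ binomPmf n θ x := by
  unfold binomPmf
  have h1 : (0:ℝ) ≤ 1 - θ := by linarith
  positivity

set_option maxHeartbeats 1000000 in
/-- DP Neyman–Pearson: the Tulap-cdf test `φ*_x = F_{N₀}(x-m)` calibrated to
size α at θ₀ is the uniformly most powerful level-α test of `θ = θ₀` vs `θ = θ₁` among
all (ε,0)-DP tests. -/
theorem dp_ump_simple (ε α θ₀ θ₁ : ℝ) (n : ℕ) (hε : 0 < ε) (hα : α ∈ Set.Ioo (0:ℝ) 1)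
    (hθ₀ : 0 < θ₀) (hθ : θ₀ < θ₁) (hθ₁ : θ₁ < 1) (hn : 1 ≤ n)
    (m : ℝ)
    (hsize : binomPower n (fun x => tulapCdf0 (Real.exp (-ε)) ((x : ℝ) - m)) θ₀ = α) :
    IsDPTest ε n (fun x => tulapCdf0 (Real.exp (-ε)) ((x : ℝ) - m)) ∧
    ∀ φ : ℕ → ℝ, (∀ x ≤ n, φ x ∈ Set.Icc (0:ℝ) 1) → IsDPTest ε n φ →
      binomPower n φ θ₀ ≤ α →
      binomPower n φ θ₁ ≤ binomPower n (fun x => tulapCdf0 (Real.exp (-ε)) ((x : ℝ) - m)) θ₁ := by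
  classical
  have hθ₀1 : θ₀ < 1 := by linarith
  have hθ₁0 : 0 < θ₁ := by linarith
  set b := Real.exp (-ε) with hbdef
  have hb : 0 < b := Real.exp_pos _
  have hb1 : b < 1 := by
    rw [hbdef]
    exact Real.exp_lt_one_iff.mpr (by linarith)
  have hbinv : Real.exp ε = b⁻¹ := by rw [hbdef, ← Real.exp_neg, neg_neg]
  set φs : ℕ → ℝ := fun x => tulapCdf0 b ((x:ℝ) - m) with hφsdef
  have h1e : 1 ≤ Real.exp ε := by have := Real.add_one_le_exp ε; linarith
  have hstep : ∀ x : ℕ, φs (x+1) = min (φs x / b) (1 - b * (1 - φs x)) := by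
    intro x
    have hc : ((x+1:ℕ):ℝ) - m = ((x:ℝ) - m) + 1 := by push_cast; ring
    simp only [hφsdef]
    rw [hc, tulap_step hb hb1]
  have hmem : ∀ x : ℕ, φs x ∈ Set.Icc (0:ℝ) 1 := fun x => tulap_mem_Icc hb hb1 _
  have hmono : ∀ x : ℕ, φs x ≤ φs (x+1) := by
    intro x
    rcases hmem x with ⟨h0, h1⟩
    rw [hstep x]
    apply le_min
    · rw [le_div_iff₀ hb]; nlinarith
    · nlinarith
  have hDP : IsDPTest ε n φs := by
    intro x hx
    rcases hmem x with ⟨h0, h1⟩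
    rcases hmem (x+1) with ⟨h0', h1'⟩
    have hs := hstep x
    refine ⟨?_, ?_, ?_, ?_⟩
    · calc φs x ≤ φs (x+1) := hmono x
        _ ≤ Real.exp ε * φs (x+1) := by nlinarith
    · calc φs (x+1) ≤ φs x / b := hs ▸ min_le_left _ _
        _ = Real.exp ε * φs x := by rw [hbinv]; ring
    · have h2 : φs (x+1) ≤ 1 - b * (1 - φs x) := hs ▸ min_le_right _ _
      rw [hbinv, inv_mul_eq_div, le_div_iff₀ hb]
      nlinarith
    · calc 1 - φs (x+1) ≤ 1 - φs x := by linarith [hmono x]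
        _ ≤ Real.exp ε * (1 - φs x) := by nlinarith
  refine ⟨hDP, ?_⟩
  intro φ hφmem hφDP hφα
  -- forward closure of {φ ≤ φs}
  have hfwd : ∀ x < n, φ x ≤ φs x → φ (x+1) ≤ φs (x+1) := by
    intro x hx hle
    have hs := hstep x
    rcases min_cases (φs x / b) (1 - b * (1 - φs x)) with ⟨he, _⟩ | ⟨he, _⟩
    · rw [hs, he]
      have h2 := (hφDP x hx).2.1
      rw [hbinv, inv_mul_eq_div] at h2
      calc φ (x+1) ≤ φ x / b := h2
        _ ≤ φs x / b := by gcongr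
    · rw [hs, he]
      have h3 := (hφDP x hx).2.2.1
      rw [hbinv, inv_mul_eq_div, le_div_iff₀ hb] at h3
      nlinarith
  have hp0pos : ∀ x, x ≤ n → 0 < binomPmf n θ₀ x := fun x hx => binomPmf_pos hθ₀ hθ₀1 hx
  have hsum0 : 0 ≤ ∑ x ∈ range (n+1), (φs x - φ x) * binomPmf n θ₀ x := by
    have he : ∑ x ∈ range (n+1), (φs x - φ x) * binomPmf n θ₀ x
        = binomPower n φs θ₀ - binomPower n φ θ₀ := by
      unfold binomPower
      rw [← Finset.sum_sub_distrib]
      exact Finset.sum_congr rfl (fun x _ => by ring)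
    rw [he, hsize]
    linarith
  have hex : ∃ x, x ≤ n ∧ φ x ≤ φs x := by
    by_contra hc
    push_neg at hc
    have hlt0 : ∑ x ∈ range (n+1), (φs x - φ x) * binomPmf n θ₀ x < 0 := by
      have h2 : ∑ x ∈ range (n+1), (φs x - φ x) * binomPmf n θ₀ x
          < ∑ x ∈ range (n+1), (0:ℝ) := by
        apply Finset.sum_lt_sum_of_nonempty ⟨0, Finset.mem_range.mpr (by omega)⟩
        intro x hx
        have hxn : x ≤ n := by
          have := Finset.mem_range.mp hx; omega
        exact mul_neg_of_neg_of_pos (by have := hc x hxn; linarith) (hp0pos x hxn)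
      simpa using h2
    linarith
  set k := Nat.find hex with hkdef
  have hkn : k ≤ n := (Nat.find_spec hex).1
  have hkle : φ k ≤ φs k := (Nat.find_spec hex).2
  have hlt : ∀ j, j < k → φs j < φ j := by
    intro j hj
    have hmin := Nat.find_min hex hj
    push_neg at hmin
    exact hmin (by omega)
  have hge : ∀ x, k ≤ x → x ≤ n → φ x ≤ φs x := by
    intro x
    induction x with
    | zero => intro h1 _; have : k = 0 := by omega
              exact this ▸ hkle
    | succ y ih =>
      intro h1 h2
      rcases eq_or_lt_of_le h1 with heq | hlt2
      · exact heq ▸ hkle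
      · exact hfwd y (by omega) (ih (by omega) (by omega))
  have hmlr : ∀ x ∈ Finset.range (n+1),
      (φs x - φ x) * (binomPmf n θ₁ k * binomPmf n θ₀ x)
        ≤ (φs x - φ x) * (binomPmf n θ₀ k * binomPmf n θ₁ x) := by
    intro x hx
    have hxn : x ≤ n := by have := Finset.mem_range.mp hx; omega
    rcases lt_or_ge x k with hxk | hxk
    · have hneg : φs x - φ x ≤ 0 := by have := hlt x hxk; linarith
      have hm := binom_mlr hθ₀ hθ hθ₁ (le_of_lt hxk) hkn
      exact mul_le_mul_of_nonpos_left (by linarith [hm]) hneg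
    · have hpos : 0 ≤ φs x - φ x := by have := hge x hxk hxn; linarith
      have hm := binom_mlr hθ₀ hθ hθ₁ hxk hxn
      exact mul_le_mul_of_nonneg_left (by linarith [hm]) hpos
  have hsum := Finset.sum_le_sum hmlr
  have e1 : ∑ x ∈ range (n+1), (φs x - φ x) * (binomPmf n θ₁ k * binomPmf n θ₀ x)
      = binomPmf n θ₁ k * ∑ x ∈ range (n+1), (φs x - φ x) * binomPmf n θ₀ x := by
    rw [Finset.mul_sum]
    exact Finset.sum_congr rfl (fun x _ => by ring)
  have e2 : ∑ x ∈ range (n+1), (φs x - φ x) * (binomPmf n θ₀ k * binomPmf n θ₁ x)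
      = binomPmf n θ₀ k * ∑ x ∈ range (n+1), (φs x - φ x) * binomPmf n θ₁ x := by
    rw [Finset.mul_sum]
    exact Finset.sum_congr rfl (fun x _ => by ring)
  rw [e1, e2] at hsum
  have hp1k : 0 ≤ binomPmf n θ₁ k := binomPmf_nonneg (by linarith) (by linarith) n k
  have hS1 : 0 ≤ ∑ x ∈ range (n+1), (φs x - φ x) * binomPmf n θ₁ x := by
    have h1 : (0:ℝ) ≤ binomPmf n θ₁ k * ∑ x ∈ range (n+1), (φs x - φ x) * binomPmf n θ₀ x :=
      mul_nonneg hp1k hsum0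
    have h2 : (0:ℝ) ≤ binomPmf n θ₀ k * ∑ x ∈ range (n+1), (φs x - φ x) * binomPmf n θ₁ x :=
      le_trans h1 hsum
    exact nonneg_of_mul_nonneg_right h2 (hp0pos k hkn)
  have he : ∑ x ∈ range (n+1), (φs x - φ x) * binomPmf n θ₁ x
      = binomPower n φs θ₁ - binomPower n φ θ₁ := by
    unfold binomPower
    rw [← Finset.sum_sub_distrib]
    exact Finset.sum_congr rfl (fun x _ => by ring)
  rw [he] at hS1
  linarith
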